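/- Define F(x,x₁,x₂,ᾱ,β̄) = [βα₂x₂(α₁x₁ − α₂x) + αβ₁x₁(β₁x − β₂x₂)] / [βα₁(α₁x₁ − α₂x) + αβ₂(β₁x − β₂x₂)] and the map R_{ᾱ,β̄}(x₁,x₂,y₁,y₂) = (F(y₁,x₁,y₂,ᾱ,β̄), y₂, x₁, F(x₂,x₁,y₂,ᾱ,β̄)). Then R_{ᾱ,β̄} is a Poisson map with respect to the bracket {x₁,x₂} = −(α₁x₁ − α₂x₂)²/α, {y₁,y₂} = −(β₁y₁ − β₂y₂)²/β, {xᵢ,yⱼ} = 0: writing (u₁,u₂,v₁,v₂) for the image, one has {u₁,u₂} = −(α₁u₁ − α₂u₂)²/α, {v₁,v₂} = −(β₁v₁ − β₂v₂)²/β, and {uᵢ,vⱼ} = 0. -/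

import Mathlib

noncomputable def d1 (f : ℂ → ℂ → ℂ → ℂ → ℂ) (a b c d : ℂ) : ℂ :=
  deriv (fun t => f t b c d) a
noncomputable def d2 (f : ℂ → ℂ → ℂ → ℂ → ℂ) (a b c d : ℂ) : ℂ :=
  deriv (fun t => f a t c d) b
noncomputable def d3 (f : ℂ → ℂ → ℂ → ℂ → ℂ) (a b c d : ℂ) : ℂ :=
  deriv (fun t => f a b t d) c
noncomputable def d4 (f : ℂ → ℂ → ℂ → ℂ → ℂ) (a b c d : ℂ) : ℂ :=
  deriv (fun t => f a b c t) d

/-- Poisson bracket on ℂ⁴ with structure functions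
`J_x = −(α₁x₁−α₂x₂)²/α` and `J_y = −(β₁y₁−β₂y₂)²/β`. -/
noncomputable def pb (α α₁ α₂ β β₁ β₂ : ℂ) (f g : ℂ → ℂ → ℂ → ℂ → ℂ)
    (a b c d : ℂ) : ℂ :=
  (-(α₁ * a - α₂ * b) ^ 2 / α) *
    (d1 f a b c d * d2 g a b c d - d2 f a b c d * d1 g a b c d) +
  (-(β₁ * c - β₂ * d) ^ 2 / β) *
    (d3 f a b c d * d4 g a b c d - d4 f a b c d * d3 g a b c d)

/-- The function F of the multiparametric cross-ratio lift. -/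
noncomputable def Fcr (α α₁ α₂ β β₁ β₂ x x₁ x₂ : ℂ) : ℂ :=
  (β * α₂ * x₂ * (α₁ * x₁ - α₂ * x) + α * β₁ * x₁ * (β₁ * x - β₂ * x₂)) /
  (β * α₁ * (α₁ * x₁ - α₂ * x) + α * β₂ * (β₁ * x - β₂ * x₂))

lemma deriv_lin_div (a b c d x : ℂ) (h : c * x + d ≠ 0) :
    deriv (fun t => (a * t + b) / (c * t + d)) x = (a * d - b * c) / (c * x + d) ^ 2 := by
  have h1 : HasDerivAt (fun t : ℂ => a * t + b) a x := by
    simpa using ((hasDerivAt_id x).const_mul a).add_const b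
  have h2 : HasDerivAt (fun t : ℂ => c * t + d) c x := by
    simpa using ((hasDerivAt_id x).const_mul c).add_const d
  have : deriv (fun t => (a * t + b) / (c * t + d)) x = _ := (h1.div h2 h).deriv
  rw [this]
  field_simp
  ring

/-- The lift of the multiparametric cross-ratio equation is a Poisson map with
respect to the bracket `{x₁,x₂} = −(α₁x₁−α₂x₂)²/α`, `{y₁,y₂} = −(β₁y₁−β₂y₂)²/β`,
`{xᵢ,yⱼ} = 0`. -/
theorem multiparametric_crossratio_lift_Poisson (α α₁ α₂ β β₁ β₂ : ℂ)
    (hα : α ≠ 0) (hβ : β ≠ 0)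
    (u₁ u₂ v₁ v₂ : ℂ → ℂ → ℂ → ℂ → ℂ)
    (hu₁ : u₁ = fun x₁ _ y₁ y₂ => Fcr α α₁ α₂ β β₁ β₂ y₁ x₁ y₂)
    (hu₂ : u₂ = fun _ _ _ y₂ => y₂)
    (hv₁ : v₁ = fun x₁ _ _ _ => x₁)
    (hv₂ : v₂ = fun x₁ x₂ _ y₂ => Fcr α α₁ α₂ β β₁ β₂ x₂ x₁ y₂)
    (x₁ x₂ y₁ y₂ : ℂ)
    (hd₁ : β * α₁ * (α₁ * x₁ - α₂ * y₁) + α * β₂ * (β₁ * y₁ - β₂ * y₂) ≠ 0)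
    (hd₂ : β * α₁ * (α₁ * x₁ - α₂ * x₂) + α * β₂ * (β₁ * x₂ - β₂ * y₂) ≠ 0) :
    pb α α₁ α₂ β β₁ β₂ u₁ u₂ x₁ x₂ y₁ y₂
      = -(α₁ * u₁ x₁ x₂ y₁ y₂ - α₂ * u₂ x₁ x₂ y₁ y₂) ^ 2 / α ∧
    pb α α₁ α₂ β β₁ β₂ v₁ v₂ x₁ x₂ y₁ y₂
      = -(β₁ * v₁ x₁ x₂ y₁ y₂ - β₂ * v₂ x₁ x₂ y₁ y₂) ^ 2 / β ∧
    pb α α₁ α₂ β β₁ β₂ u₁ v₁ x₁ x₂ y₁ y₂ = 0 ∧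
    pb α α₁ α₂ β β₁ β₂ u₁ v₂ x₁ x₂ y₁ y₂ = 0 ∧
    pb α α₁ α₂ β β₁ β₂ u₂ v₁ x₁ x₂ y₁ y₂ = 0 ∧
    pb α α₁ α₂ β β₁ β₂ u₂ v₂ x₁ x₂ y₁ y₂ = 0 := by
  subst hu₁ hu₂ hv₁ hv₂
  -- abbreviations for the two denominators
  set P : ℂ := β * α₁ * (α₁ * x₁ - α₂ * y₁) + α * β₂ * (β₁ * y₁ - β₂ * y₂) with hP
  set Q : ℂ := β * α₁ * (α₁ * x₁ - α₂ * x₂) + α * β₂ * (β₁ * x₂ - β₂ * y₂) with hQ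
  -- derivatives of u₁ = Fcr ⋯ y₁ x₁ y₂ (in x₁, y₁, y₂)
  have hfu1 : (fun t => Fcr α α₁ α₂ β β₁ β₂ y₁ t y₂)
      = fun t => ((β * α₁ * α₂ * y₂ + α * β₁ ^ 2 * y₁ - α * β₁ * β₂ * y₂) * t
          + (-(β * α₂ ^ 2 * y₁ * y₂)))
        / ((β * α₁ ^ 2) * t + (-(β * α₁ * α₂ * y₁) + α * β₁ * β₂ * y₁ - α * β₂ ^ 2 * y₂)) := by
    funext t; unfold Fcr; ring_nf
  have hfu3 : (fun t => Fcr α α₁ α₂ β β₁ β₂ t x₁ y₂)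
      = fun t => ((-(β * α₂ ^ 2 * y₂) + α * β₁ ^ 2 * x₁) * t
          + (β * α₁ * α₂ * x₁ * y₂ - α * β₁ * β₂ * x₁ * y₂))
        / ((-(β * α₁ * α₂) + α * β₁ * β₂) * t + (β * α₁ ^ 2 * x₁ - α * β₂ ^ 2 * y₂)) := by
    funext t; unfold Fcr; ring_nf
  have hfu4 : (fun t => Fcr α α₁ α₂ β β₁ β₂ y₁ x₁ t)
      = fun t => ((β * α₁ * α₂ * x₁ - β * α₂ ^ 2 * y₁ - α * β₁ * β₂ * x₁) * t
          + (α * β₁ ^ 2 * y₁ * x₁))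
        / ((-(α * β₂ ^ 2)) * t + (β * α₁ ^ 2 * x₁ - β * α₁ * α₂ * y₁ + α * β₁ * β₂ * y₁)) := by
    funext t; unfold Fcr; ring_nf
  -- same for v₂ = Fcr ⋯ x₂ x₁ y₂
  have hfv1 : (fun t => Fcr α α₁ α₂ β β₁ β₂ x₂ t y₂)
      = fun t => ((β * α₁ * α₂ * y₂ + α * β₁ ^ 2 * x₂ - α * β₁ * β₂ * y₂) * t
          + (-(β * α₂ ^ 2 * x₂ * y₂)))
        / ((β * α₁ ^ 2) * t + (-(β * α₁ * α₂ * x₂) + α * β₁ * β₂ * x₂ - α * β₂ ^ 2 * y₂)) := by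
    funext t; unfold Fcr; ring_nf
  have hfv2 : (fun t => Fcr α α₁ α₂ β β₁ β₂ t x₁ y₂)
      = fun t => ((-(β * α₂ ^ 2 * y₂) + α * β₁ ^ 2 * x₁) * t
          + (β * α₁ * α₂ * x₁ * y₂ - α * β₁ * β₂ * x₁ * y₂))
        / ((-(β * α₁ * α₂) + α * β₁ * β₂) * t + (β * α₁ ^ 2 * x₁ - α * β₂ ^ 2 * y₂)) := by
    funext t; unfold Fcr; ring_nf
  have hfv4 : (fun t => Fcr α α₁ α₂ β β₁ β₂ x₂ x₁ t)
      = fun t => ((β * α₁ * α₂ * x₁ - β * α₂ ^ 2 * x₂ - α * β₁ * β₂ * x₁) * t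
          + (α * β₁ ^ 2 * x₂ * x₁))
        / ((-(α * β₂ ^ 2)) * t + (β * α₁ ^ 2 * x₁ - β * α₁ * α₂ * x₂ + α * β₁ * β₂ * x₂)) := by
    funext t; unfold Fcr; ring_nf
  -- nonvanishing denominators rewritten
  have hP1 : (β * α₁ ^ 2) * x₁ + (-(β * α₁ * α₂ * y₁) + α * β₁ * β₂ * y₁ - α * β₂ ^ 2 * y₂) ≠ 0 := by
    intro h; apply hd₁; rw [hP]; linear_combination h
  have hP3 : (-(β * α₁ * α₂) + α * β₁ * β₂) * y₁ + (β * α₁ ^ 2 * x₁ - α * β₂ ^ 2 * y₂) ≠ 0 := by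
    intro h; apply hd₁; rw [hP]; linear_combination h
  have hP4 : (-(α * β₂ ^ 2)) * y₂ + (β * α₁ ^ 2 * x₁ - β * α₁ * α₂ * y₁ + α * β₁ * β₂ * y₁) ≠ 0 := by
    intro h; apply hd₁; rw [hP]; linear_combination h
  have hQ1 : (β * α₁ ^ 2) * x₁ + (-(β * α₁ * α₂ * x₂) + α * β₁ * β₂ * x₂ - α * β₂ ^ 2 * y₂) ≠ 0 := by
    intro h; apply hd₂; rw [hQ]; linear_combination h
  have hQ2 : (-(β * α₁ * α₂) + α * β₁ * β₂) * x₂ + (β * α₁ ^ 2 * x₁ - α * β₂ ^ 2 * y₂) ≠ 0 := by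
    intro h; apply hd₂; rw [hQ]; linear_combination h
  have hQ4 : (-(α * β₂ ^ 2)) * y₂ + (β * α₁ ^ 2 * x₁ - β * α₁ * α₂ * x₂ + α * β₁ * β₂ * x₂) ≠ 0 := by
    intro h; apply hd₂; rw [hQ]; linear_combination h
  -- all the partial derivatives
  have e1u : d1 (fun x₁ _ y₁ y₂ => Fcr α α₁ α₂ β β₁ β₂ y₁ x₁ y₂) x₁ x₂ y₁ y₂
      = ((β * α₁ * α₂ * y₂ + α * β₁ ^ 2 * y₁ - α * β₁ * β₂ * y₂) *
          (-(β * α₁ * α₂ * y₁) + α * β₁ * β₂ * y₁ - α * β₂ ^ 2 * y₂)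
        - (-(β * α₂ ^ 2 * y₁ * y₂)) * (β * α₁ ^ 2)) /
        ((β * α₁ ^ 2) * x₁ + (-(β * α₁ * α₂ * y₁) + α * β₁ * β₂ * y₁ - α * β₂ ^ 2 * y₂)) ^ 2 := by
    show deriv (fun t => Fcr α α₁ α₂ β β₁ β₂ y₁ t y₂) x₁ = _
    rw [hfu1, deriv_lin_div _ _ _ _ _ hP1]
  have e2u : d2 (fun x₁ _ y₁ y₂ => Fcr α α₁ α₂ β β₁ β₂ y₁ x₁ y₂) x₁ x₂ y₁ y₂ = 0 := by
    show deriv (fun _ : ℂ => Fcr α α₁ α₂ β β₁ β₂ y₁ x₁ y₂) x₂ = 0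
    simp
  have e3u : d3 (fun x₁ _ y₁ y₂ => Fcr α α₁ α₂ β β₁ β₂ y₁ x₁ y₂) x₁ x₂ y₁ y₂
      = ((-(β * α₂ ^ 2 * y₂) + α * β₁ ^ 2 * x₁) * (β * α₁ ^ 2 * x₁ - α * β₂ ^ 2 * y₂)
        - (β * α₁ * α₂ * x₁ * y₂ - α * β₁ * β₂ * x₁ * y₂) * (-(β * α₁ * α₂) + α * β₁ * β₂)) /
        ((-(β * α₁ * α₂) + α * β₁ * β₂) * y₁ + (β * α₁ ^ 2 * x₁ - α * β₂ ^ 2 * y₂)) ^ 2 := by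
    show deriv (fun t => Fcr α α₁ α₂ β β₁ β₂ t x₁ y₂) y₁ = _
    rw [hfu3, deriv_lin_div _ _ _ _ _ hP3]
  have e4u : d4 (fun x₁ _ y₁ y₂ => Fcr α α₁ α₂ β β₁ β₂ y₁ x₁ y₂) x₁ x₂ y₁ y₂
      = ((β * α₁ * α₂ * x₁ - β * α₂ ^ 2 * y₁ - α * β₁ * β₂ * x₁) *
          (β * α₁ ^ 2 * x₁ - β * α₁ * α₂ * y₁ + α * β₁ * β₂ * y₁)
        - (α * β₁ ^ 2 * y₁ * x₁) * (-(α * β₂ ^ 2))) /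
        ((-(α * β₂ ^ 2)) * y₂ + (β * α₁ ^ 2 * x₁ - β * α₁ * α₂ * y₁ + α * β₁ * β₂ * y₁)) ^ 2 := by
    show deriv (fun t => Fcr α α₁ α₂ β β₁ β₂ y₁ x₁ t) y₂ = _
    rw [hfu4, deriv_lin_div _ _ _ _ _ hP4]
  have e1v : d1 (fun x₁ x₂ _ y₂ => Fcr α α₁ α₂ β β₁ β₂ x₂ x₁ y₂) x₁ x₂ y₁ y₂
      = ((β * α₁ * α₂ * y₂ + α * β₁ ^ 2 * x₂ - α * β₁ * β₂ * y₂) *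
          (-(β * α₁ * α₂ * x₂) + α * β₁ * β₂ * x₂ - α * β₂ ^ 2 * y₂)
        - (-(β * α₂ ^ 2 * x₂ * y₂)) * (β * α₁ ^ 2)) /
        ((β * α₁ ^ 2) * x₁ + (-(β * α₁ * α₂ * x₂) + α * β₁ * β₂ * x₂ - α * β₂ ^ 2 * y₂)) ^ 2 := by
    show deriv (fun t => Fcr α α₁ α₂ β β₁ β₂ x₂ t y₂) x₁ = _
    rw [hfv1, deriv_lin_div _ _ _ _ _ hQ1]
  have e2v : d2 (fun x₁ x₂ _ y₂ => Fcr α α₁ α₂ β β₁ β₂ x₂ x₁ y₂) x₁ x₂ y₁ y₂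
      = ((-(β * α₂ ^ 2 * y₂) + α * β₁ ^ 2 * x₁) * (β * α₁ ^ 2 * x₁ - α * β₂ ^ 2 * y₂)
        - (β * α₁ * α₂ * x₁ * y₂ - α * β₁ * β₂ * x₁ * y₂) * (-(β * α₁ * α₂) + α * β₁ * β₂)) /
        ((-(β * α₁ * α₂) + α * β₁ * β₂) * x₂ + (β * α₁ ^ 2 * x₁ - α * β₂ ^ 2 * y₂)) ^ 2 := by
    show deriv (fun t => Fcr α α₁ α₂ β β₁ β₂ t x₁ y₂) x₂ = _
    rw [hfv2, deriv_lin_div _ _ _ _ _ hQ2]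
  have e3v : d3 (fun x₁ x₂ _ y₂ => Fcr α α₁ α₂ β β₁ β₂ x₂ x₁ y₂) x₁ x₂ y₁ y₂ = 0 := by
    show deriv (fun _ : ℂ => Fcr α α₁ α₂ β β₁ β₂ x₂ x₁ y₂) y₁ = 0
    simp
  have e4v : d4 (fun x₁ x₂ _ y₂ => Fcr α α₁ α₂ β β₁ β₂ x₂ x₁ y₂) x₁ x₂ y₁ y₂
      = ((β * α₁ * α₂ * x₁ - β * α₂ ^ 2 * x₂ - α * β₁ * β₂ * x₁) *
          (β * α₁ ^ 2 * x₁ - β * α₁ * α₂ * x₂ + α * β₁ * β₂ * x₂)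
        - (α * β₁ ^ 2 * x₂ * x₁) * (-(α * β₂ ^ 2))) /
        ((-(α * β₂ ^ 2)) * y₂ + (β * α₁ ^ 2 * x₁ - β * α₁ * α₂ * x₂ + α * β₁ * β₂ * x₂)) ^ 2 := by
    show deriv (fun t => Fcr α α₁ α₂ β β₁ β₂ x₂ x₁ t) y₂ = _
    rw [hfv4, deriv_lin_div _ _ _ _ _ hQ4]
  -- derivatives of the coordinate functions
  have c1 : d1 (fun _ _ _ y₂ : ℂ => y₂) x₁ x₂ y₁ y₂ = 0 := by
    show deriv (fun _ : ℂ => y₂) x₁ = 0; simp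
  have c2 : d2 (fun _ _ _ y₂ : ℂ => y₂) x₁ x₂ y₁ y₂ = 0 := by
    show deriv (fun _ : ℂ => y₂) x₂ = 0; simp
  have c3 : d3 (fun _ _ _ y₂ : ℂ => y₂) x₁ x₂ y₁ y₂ = 0 := by
    show deriv (fun _ : ℂ => y₂) y₁ = 0; simp
  have c4 : d4 (fun _ _ _ y₂ : ℂ => y₂) x₁ x₂ y₁ y₂ = 1 := by
    show deriv (fun t : ℂ => t) y₂ = 1; simp
  have b1 : d1 (fun x₁ _ _ _ : ℂ => x₁) x₁ x₂ y₁ y₂ = 1 := by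
    show deriv (fun t : ℂ => t) x₁ = 1; simp
  have b2 : d2 (fun x₁ _ _ _ : ℂ => x₁) x₁ x₂ y₁ y₂ = 0 := by
    show deriv (fun _ : ℂ => x₁) x₂ = 0; simp
  have b3 : d3 (fun x₁ _ _ _ : ℂ => x₁) x₁ x₂ y₁ y₂ = 0 := by
    show deriv (fun _ : ℂ => x₁) y₁ = 0; simp
  have b4 : d4 (fun x₁ _ _ _ : ℂ => x₁) x₁ x₂ y₁ y₂ = 0 := by
    show deriv (fun _ : ℂ => x₁) y₂ = 0; simp
  have hPne : P ≠ 0 := hd₁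
  have hQne : Q ≠ 0 := hd₂
  have hP3' : (-(β * α₁ * α₂) + α * β₁ * β₂) * y₁ + (β * α₁ ^ 2 * x₁ - α * β₂ ^ 2 * y₂) = P := by
    rw [hP]; ring
  have hP1' : (β * α₁ ^ 2) * x₁ + (-(β * α₁ * α₂ * y₁) + α * β₁ * β₂ * y₁ - α * β₂ ^ 2 * y₂) = P := by
    rw [hP]; ring
  have hP4' : (-(α * β₂ ^ 2)) * y₂ + (β * α₁ ^ 2 * x₁ - β * α₁ * α₂ * y₁ + α * β₁ * β₂ * y₁) = P := by
    rw [hP]; ring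
  have hQ1' : (β * α₁ ^ 2) * x₁ + (-(β * α₁ * α₂ * x₂) + α * β₁ * β₂ * x₂ - α * β₂ ^ 2 * y₂) = Q := by
    rw [hQ]; ring
  have hQ2' : (-(β * α₁ * α₂) + α * β₁ * β₂) * x₂ + (β * α₁ ^ 2 * x₁ - α * β₂ ^ 2 * y₂) = Q := by
    rw [hQ]; ring
  have hQ4' : (-(α * β₂ ^ 2)) * y₂ + (β * α₁ ^ 2 * x₁ - β * α₁ * α₂ * x₂ + α * β₁ * β₂ * x₂) = Q := by
    rw [hQ]; ring
  rw [hP1'] at e1u; rw [hP3'] at e3u; rw [hP4'] at e4u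
  rw [hQ1'] at e1v; rw [hQ2'] at e2v; rw [hQ4'] at e4v
  have hFu : Fcr α α₁ α₂ β β₁ β₂ y₁ x₁ y₂
      = (β * α₂ * y₂ * (α₁ * x₁ - α₂ * y₁) + α * β₁ * x₁ * (β₁ * y₁ - β₂ * y₂)) / P := by
    rw [hP]; rfl
  have hFv : Fcr α α₁ α₂ β β₁ β₂ x₂ x₁ y₂
      = (β * α₂ * y₂ * (α₁ * x₁ - α₂ * x₂) + α * β₁ * x₁ * (β₁ * x₂ - β₂ * y₂)) / Q := by
    rw [hQ]; rfl
  refine ⟨?_, ?_, ?_, ?_, ?_, ?_⟩ <;>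
    simp only [pb, e1u, e2u, e3u, e4u, e1v, e2v, e3v, e4v, c1, c2, c3, c4, b1, b2, b3, b4,
      hFu, hFv] <;>
    field_simp <;>
    ring
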